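/- Let R be a commutative ring with SL_n(R) = E_n(R) (e.g., R local). Then TA_n(R) ∩ SA_n(R) = EA_n(R): a tame polynomial automorphism with Jacobian determinant 1 is a product of elementary automorphisms. -/

import Mathlib

open MvPolynomial

noncomputable section

/-- An elementary automorphism of the polynomial ring: it adds to one variable `X i`
a polynomial `f` not involving `X i`, and fixes all other variables. -/
def IsElementaryAut {R : Type*} [CommRing R] {n : ℕ}
    (e : MvPolynomial (Fin n) R ≃ₐ[R] MvPolynomial (Fin n) R) : Prop :=
  ∃ (i : Fin n) (f : MvPolynomial (Fin n) R), degreeOf i f = 0 ∧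
    e (X i) = X i + f ∧ ∀ j : Fin n, j ≠ i → e (X j) = X j

/-- `EA R n`: the subgroup generated by elementary automorphisms. -/
def EA (R : Type*) [CommRing R] (n : ℕ) :
    Subgroup (MvPolynomial (Fin n) R ≃ₐ[R] MvPolynomial (Fin n) R) :=
  Subgroup.closure {e | IsElementaryAut e}

/-- A linear automorphism: each variable is sent to a homogeneous polynomial of degree 1. -/
def IsLinearAut {R : Type*} [CommRing R] {n : ℕ}
    (φ : MvPolynomial (Fin n) R ≃ₐ[R] MvPolynomial (Fin n) R) : Prop :=
  ∀ i, (φ (X i)).IsHomogeneous 1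

/-- `TA R n`: the subgroup of tame automorphisms, generated by linear and elementary ones. -/
def TA (R : Type*) [CommRing R] (n : ℕ) :
    Subgroup (MvPolynomial (Fin n) R ≃ₐ[R] MvPolynomial (Fin n) R) :=
  Subgroup.closure ({e | IsElementaryAut e} ∪ {φ | IsLinearAut φ})

/-- The Jacobian determinant of a polynomial automorphism. -/
def jacDet {R : Type*} [CommRing R] {n : ℕ}
    (φ : MvPolynomial (Fin n) R ≃ₐ[R] MvPolynomial (Fin n) R) : MvPolynomial (Fin n) R :=
  Matrix.det (Matrix.of fun i j => pderiv j (φ (X i)))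

/-- Stabilization `φ^{[m]}` of an automorphism in `n` variables to one in `n + m` variables:
it acts as `φ` on the first `n` variables and fixes the last `m` variables. -/
def stab (R : Type*) [CommRing R] (n m : ℕ)
    (φ : MvPolynomial (Fin n) R ≃ₐ[R] MvPolynomial (Fin n) R) :
    MvPolynomial (Fin (n + m)) R ≃ₐ[R] MvPolynomial (Fin (n + m)) R :=
  ((renameEquiv R (((finSumFinEquiv (m := n) (n := m)).symm).trans
      (Equiv.sumComm (Fin n) (Fin m)))).trans
    ((sumAlgEquiv R (Fin m) (Fin n)).trans
      ((mapAlgEquiv (Fin m) φ).trans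
        ((sumAlgEquiv R (Fin m) (Fin n)).symm.trans
          (renameEquiv R ((Equiv.sumComm (Fin m) (Fin n)).trans finSumFinEquiv))))))



namespace TAEA

variable {R : Type*} [CommRing R] {n : ℕ}

-- ## chain rule and multiplicativity of the Jacobian

lemma chain_rule {σ : Type*} [Fintype σ] [DecidableEq σ]
    (g : σ → MvPolynomial σ R) (j : σ) (p : MvPolynomial σ R) :
    pderiv j (aeval g p) = ∑ k, aeval g (pderiv k p) * pderiv j (g k) := by
  induction p using MvPolynomial.induction_on with
  | C a => simp
  | add p q hp hq =>
    rw [map_add, map_add, hp, hq, ← Finset.sum_add_distrib]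
    exact Finset.sum_congr rfl fun k _ => by simp [add_mul]
  | mul_X p i hp =>
    rw [map_mul, aeval_X, pderiv_mul, hp, Finset.sum_mul]
    have : ∀ k : σ, aeval g (pderiv k (p * X i)) * pderiv j (g k)
        = aeval g (pderiv k p) * pderiv j (g k) * g i
          + (if k = i then aeval g p * pderiv j (g k) else 0) := by
      intro k
      rw [pderiv_mul, map_add, add_mul, map_mul, aeval_X]
      congr 1
      · ring
      · by_cases h : k = i
        · subst h; simp
        · simp [pderiv_X_of_ne (Ne.symm h), h]
    rw [Finset.sum_congr rfl fun k _ => this k, Finset.sum_add_distrib,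
      Finset.sum_ite_eq' Finset.univ i]
    simp

lemma aut_mul_apply (φ ψ : MvPolynomial (Fin n) R ≃ₐ[R] MvPolynomial (Fin n) R)
    (p : MvPolynomial (Fin n) R) : (φ * ψ) p = φ (ψ p) := rfl

lemma jacDet_mul (φ ψ : MvPolynomial (Fin n) R ≃ₐ[R] MvPolynomial (Fin n) R) :
    jacDet (φ * ψ) = φ (jacDet ψ) * jacDet φ := by
  have key : (Matrix.of fun i j => pderiv j ((φ * ψ) (X i)))
      = (Matrix.of fun i j => pderiv j (ψ (X i))).map φ.toAlgHom
        * Matrix.of fun i j => pderiv j (φ (X i)) := by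
    refine Matrix.ext fun i j => ?_
    rw [Matrix.mul_apply]
    show pderiv j (φ (ψ (X i))) = _
    have h1 : φ (ψ (X i)) = aeval (⇑φ.toAlgHom ∘ X) (ψ (X i)) :=
      DFunLike.congr_fun (aeval_unique φ.toAlgHom) _
    rw [h1, chain_rule]
    refine Finset.sum_congr rfl fun k _ => ?_
    congr 1
    exact (DFunLike.congr_fun (aeval_unique φ.toAlgHom) (pderiv k (ψ (X i)))).symm
  rw [jacDet, key, Matrix.det_mul]
  congr 1
  have := AlgHom.map_det φ.toAlgHom (Matrix.of fun i j => pderiv j (ψ (X i)))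
  rw [AlgHom.mapMatrix_apply] at this
  exact this.symm

-- ## basic vars/degreeOf lemmas

lemma aequiv_C (e : MvPolynomial (Fin n) R ≃ₐ[R] MvPolynomial (Fin n) R) (a : R) :
    e (C a) = C a := e.commutes a

lemma degreeOf_eq_zero_iff2 {σ : Type*} {i : σ} {f : MvPolynomial σ R} :
    degreeOf i f = 0 ↔ i ∉ f.vars := by
  classical
  rw [degreeOf_def, vars_def, Multiset.mem_toFinset]
  simp [Multiset.count_eq_zero]

lemma vars_X_subset {σ : Type*} (k : σ) : (X k : MvPolynomial σ R).vars ⊆ {k} := by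
  rcases subsingleton_or_nontrivial R with h | h
  · rw [Subsingleton.elim (X k : MvPolynomial σ R) 0, vars_0]
    exact Finset.empty_subset _
  · rw [vars_X]

lemma vars_C_mul_X_subset {σ : Type*} (u : R) (k : σ) :
    (C u * X k : MvPolynomial σ R).vars ⊆ {k} := by
  classical
  intro a ha
  have h1 := vars_mul (C u) (X k) ha
  rw [vars_C, Finset.empty_union] at h1
  exact vars_X_subset k h1

lemma degreeOf_C_mul_eq_zero {σ : Type*} [DecidableEq σ] {i : σ} (a : R) {f : MvPolynomial σ R}
    (h : degreeOf i f = 0) : degreeOf i (C a * f) = 0 := by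
  rw [degreeOf_eq_zero_iff2] at h ⊢
  intro hv
  have h1 := vars_mul (C a) f hv
  rw [vars_C, Finset.empty_union] at h1
  exact h h1

lemma degreeOf_zero_pderiv {σ : Type*} {i : σ} {f : MvPolynomial σ R}
    (h : degreeOf i f = 0) : pderiv i f = 0 := by
  apply pderiv_eq_zero_of_notMem_vars
  exact degreeOf_eq_zero_iff2.mp h

-- ## jacDet of identity and elementary automorphisms

lemma jacDet_one : jacDet (1 : MvPolynomial (Fin n) R ≃ₐ[R] MvPolynomial (Fin n) R) = 1 := by
  have : (Matrix.of fun i j =>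
        pderiv j ((1 : MvPolynomial (Fin n) R ≃ₐ[R] MvPolynomial (Fin n) R) (X i)))
      = (1 : Matrix (Fin n) (Fin n) (MvPolynomial (Fin n) R)) := by
    refine Matrix.ext fun i j => ?_
    show pderiv j (X i) = _
    rw [Matrix.one_apply, pderiv_X]
    by_cases h : i = j <;> simp [h, Pi.single_apply]
  rw [jacDet, this, Matrix.det_one]

lemma jacDet_elementary {e : MvPolynomial (Fin n) R ≃ₐ[R] MvPolynomial (Fin n) R}
    (he : IsElementaryAut e) : jacDet e = 1 := by
  obtain ⟨i, f, hdeg, hei, hej⟩ := he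
  have key : (Matrix.of fun i' j => pderiv j (e (X i')))
      = (1 : Matrix (Fin n) (Fin n) (MvPolynomial (Fin n) R)).updateRow i
          ((1 : Matrix (Fin n) (Fin n) (MvPolynomial (Fin n) R)) i + (fun j => pderiv j f)) := by
    refine Matrix.ext fun i' j => ?_
    by_cases h : i' = i
    · subst h
      rw [Matrix.updateRow_self]
      show pderiv j (e (X i')) = _
      show _ = (1 : Matrix (Fin n) (Fin n) (MvPolynomial (Fin n) R)) i' j + pderiv j f
      rw [hei, map_add, Matrix.one_apply, pderiv_X]
      by_cases h2 : i' = j <;> simp [h2, Pi.single_apply]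
    · rw [Matrix.updateRow_ne h]
      show pderiv j (e (X i')) = _
      rw [hej i' h, Matrix.one_apply, pderiv_X]
      by_cases h2 : i' = j <;> simp [h2, Pi.single_apply]
  rw [jacDet, key, Matrix.det_updateRow_add, Matrix.updateRow_eq_self, Matrix.det_one]
  have : ((1 : Matrix (Fin n) (Fin n) (MvPolynomial (Fin n) R)).updateRow i
      (fun j => pderiv j f)).det = 0 := by
    apply Matrix.det_eq_zero_of_column_eq_zero i
    intro k
    by_cases h : k = i
    · subst h; rw [Matrix.updateRow_self]; exact degreeOf_zero_pderiv hdeg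
    · rw [Matrix.updateRow_ne h, Matrix.one_apply_ne h]
  rw [this, add_zero]

/-- The subgroup of automorphisms with Jacobian determinant 1. -/
def SAgrp (R : Type*) [CommRing R] (n : ℕ) :
    Subgroup (MvPolynomial (Fin n) R ≃ₐ[R] MvPolynomial (Fin n) R) where
  carrier := {φ | jacDet φ = 1}
  one_mem' := jacDet_one
  mul_mem' := by
    intro a b ha hb
    show jacDet (a * b) = 1
    rw [jacDet_mul, ha, hb, map_one, one_mul]
  inv_mem' := by
    intro a ha
    show jacDet a⁻¹ = 1
    have h1 : jacDet (a * a⁻¹) = 1 := by rw [mul_inv_cancel]; exact jacDet_one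
    rw [jacDet_mul, ha, mul_one] at h1
    exact a.injective (h1.trans (map_one a).symm)

lemma EA_le_SAgrp : EA R n ≤ SAgrp R n :=
  (Subgroup.closure_le (SAgrp R n)).mpr fun _ he => jacDet_elementary he

-- ## scaling automorphisms

def scaleHom (u : R) (i0 : Fin n) : MvPolynomial (Fin n) R →ₐ[R] MvPolynomial (Fin n) R :=
  aeval (fun j => if j = i0 then C u * X i0 else X j)

lemma scaleHom_X_self (u : R) (i0 : Fin n) : scaleHom u i0 (X i0) = C u * X i0 := by
  simp [scaleHom]

lemma scaleHom_X_ne (u : R) {i0 j : Fin n} (h : j ≠ i0) : scaleHom u i0 (X j) = X j := by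
  simp [scaleHom, h]

lemma scaleHom_comp (u v : R) (i0 : Fin n) :
    (scaleHom u i0).comp (scaleHom v i0) = scaleHom (u * v) i0 := by
  apply algHom_ext
  intro j
  by_cases h : j = i0
  · subst h
    simp only [AlgHom.comp_apply, scaleHom_X_self, map_mul, scaleHom_X_self]
    rw [show (scaleHom u j) (C v) = C v from aeval_C _ _]
    ring
  · simp [AlgHom.comp_apply, scaleHom_X_ne _ h]

lemma scaleHom_one (i0 : Fin n) : scaleHom (1 : R) i0 = AlgHom.id R _ := by
  apply algHom_ext
  intro j
  by_cases h : j = i0 <;> simp [scaleHom, h]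

def scaleAut (u : Rˣ) (i0 : Fin n) :
    MvPolynomial (Fin n) R ≃ₐ[R] MvPolynomial (Fin n) R :=
  AlgEquiv.ofAlgHom (scaleHom u i0) (scaleHom (↑u⁻¹) i0)
    (by rw [scaleHom_comp]; simp [scaleHom_one])
    (by rw [scaleHom_comp]; simp [scaleHom_one])

lemma scaleAut_apply (u : Rˣ) (i0 : Fin n) (p : MvPolynomial (Fin n) R) :
    scaleAut u i0 p = scaleHom (u : R) i0 p := rfl

lemma scaleAut_inv_apply (u : Rˣ) (i0 : Fin n) (p : MvPolynomial (Fin n) R) :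
    (scaleAut u i0)⁻¹ p = scaleHom ((↑u⁻¹ : R)) i0 p := rfl

lemma scaleAut_inv (u : Rˣ) (i0 : Fin n) :
    (scaleAut u i0)⁻¹ = scaleAut u⁻¹ i0 := by
  apply AlgEquiv.ext
  intro p
  rw [scaleAut_inv_apply, scaleAut_apply]

lemma scaleAut_mul (u v : Rˣ) (i0 : Fin n) :
    scaleAut (u * v) i0 = scaleAut u i0 * scaleAut v i0 := by
  apply AlgEquiv.ext
  intro p
  show _ = scaleAut u i0 (scaleAut v i0 p)
  simp only [scaleAut_apply]
  rw [← AlgHom.comp_apply, scaleHom_comp]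
  norm_num

lemma scaleAut_one (i0 : Fin n) : scaleAut (1 : Rˣ) i0 = 1 := by
  apply AlgEquiv.ext
  intro p
  show _ = p
  rw [scaleAut_apply, Units.val_one, scaleHom_one]
  rfl

lemma degreeOf_scaleHom_eq_zero (u : R) (i0 : Fin n) {i : Fin n} {f : MvPolynomial (Fin n) R}
    (h : degreeOf i f = 0) : degreeOf i (scaleHom u i0 f) = 0 := by
  rw [degreeOf_eq_zero_iff2] at h ⊢
  intro hv
  have heq : scaleHom u i0 f = bind₁ (fun j => if j = i0 then C u * X i0 else X j) f := rfl
  rw [heq] at hv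
  obtain ⟨k, hk, hik⟩ := mem_vars_bind₁ _ _ hv
  have hik' : i = k := by
    by_cases hki : k = i0
    · subst hki
      rw [if_pos rfl] at hik
      exact Finset.mem_singleton.mp (vars_C_mul_X_subset u k hik)
    · rw [if_neg hki] at hik
      exact Finset.mem_singleton.mp (vars_X_subset k hik)
  exact h (hik' ▸ hk)

lemma jacDet_scaleAut (u : Rˣ) (i0 : Fin n) : jacDet (scaleAut u i0) = C (u : R) := by
  have key : (Matrix.of fun i j => pderiv j (scaleAut u i0 (X i)))
      = Matrix.diagonal (fun i => if i = i0 then C (u : R) else 1) := by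
    refine Matrix.ext fun i j => ?_
    show pderiv j (scaleAut u i0 (X i)) = _
    rw [scaleAut_apply]
    by_cases h : i = i0
    · subst h
      rw [scaleHom_X_self, pderiv_C_mul, pderiv_X]
      rw [Matrix.diagonal_apply]
      by_cases h2 : j = i
      · subst h2; simp
      · simp [Pi.single_apply, h2, Ne.symm h2]
    · rw [scaleHom_X_ne _ h, pderiv_X, Matrix.diagonal_apply]
      by_cases h2 : i = j
      · subst h2; simp [h, Pi.single_apply]
      · simp [Pi.single_apply, h2, Ne.symm h2, fun hh : j = i => h2 (hh.symm)]
  rw [jacDet, key, Matrix.det_diagonal]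
  rw [Finset.prod_ite_eq' Finset.univ i0 (fun _ => C (u : R))]
  simp

-- ## conjugation of elementary automorphisms by scalings

lemma conj_elementary (v : Rˣ) (i0 : Fin n)
    {e : MvPolynomial (Fin n) R ≃ₐ[R] MvPolynomial (Fin n) R} (he : IsElementaryAut e) :
    IsElementaryAut (scaleAut v i0 * e * (scaleAut v i0)⁻¹) := by
  classical
  obtain ⟨i, f, hdeg, hei, hej⟩ := he
  by_cases hii : i = i0
  · subst hii
    refine ⟨i, scaleHom (↑v : R) i (C (↑v⁻¹ : R) * f),
      degreeOf_scaleHom_eq_zero _ _ (degreeOf_C_mul_eq_zero _ hdeg), ?_, ?_⟩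
    · show scaleAut v i (e ((scaleAut v i)⁻¹ (X i))) = _
      rw [scaleAut_inv_apply, scaleHom_X_self]
      rw [show e (C (↑v⁻¹ : R) * X i) = C (↑v⁻¹ : R) * (X i + f) by
        rw [map_mul, aequiv_C, hei]]
      rw [mul_add, map_add, scaleAut_apply, map_mul, map_mul]
      rw [show scaleHom (↑v : R) i (C (↑v⁻¹ : R)) = C (↑v⁻¹ : R) from (scaleHom _ i).commutes' _]
      rw [scaleHom_X_self, ← mul_assoc, ← map_mul]
      norm_num
      rw [aequiv_C, scaleAut_apply]
    · intro j hj
      show scaleAut v i (e ((scaleAut v i)⁻¹ (X j))) = _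
      rw [scaleAut_inv_apply, scaleHom_X_ne _ hj, hej j hj, scaleAut_apply, scaleHom_X_ne _ hj]
  · refine ⟨i, scaleHom (↑v : R) i0 f, degreeOf_scaleHom_eq_zero _ _ hdeg, ?_, ?_⟩
    · show scaleAut v i0 (e ((scaleAut v i0)⁻¹ (X i))) = _
      rw [scaleAut_inv_apply, scaleHom_X_ne _ hii, hei, scaleAut_apply, map_add,
        scaleHom_X_ne _ hii]
    · intro j hj
      show scaleAut v i0 (e ((scaleAut v i0)⁻¹ (X j))) = _
      by_cases hj0 : j = i0
      · subst hj0
        rw [scaleAut_inv_apply, scaleHom_X_self]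
        rw [show e (C (↑v⁻¹ : R) * X j) = C (↑v⁻¹ : R) * X j by
          rw [map_mul, aequiv_C, hej j (fun hh => hj hh)]]
        rw [scaleAut_apply, map_mul, scaleHom_X_self]
        rw [show scaleHom (↑v : R) j (C (↑v⁻¹ : R)) = C (↑v⁻¹ : R) from (scaleHom _ j).commutes' _]
        rw [← mul_assoc, ← map_mul]
        norm_num
      · rw [scaleAut_inv_apply, scaleHom_X_ne _ hj0, hej j hj, scaleAut_apply, scaleHom_X_ne _ hj0]

lemma conj_mem_EA (v : Rˣ) (i0 : Fin n)
    {e : MvPolynomial (Fin n) R ≃ₐ[R] MvPolynomial (Fin n) R} (he : e ∈ EA R n) :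
    scaleAut v i0 * e * (scaleAut v i0)⁻¹ ∈ EA R n := by
  have hmap : (EA R n).map (MulAut.conj (scaleAut v i0)).toMonoidHom ≤ EA R n := by
    rw [EA, MonoidHom.map_closure]
    apply Subgroup.closure_mono
    rintro x ⟨y, hy, rfl⟩
    exact conj_elementary v i0 hy
  exact hmap ⟨e, he, rfl⟩

-- ## homogeneous degree-one decomposition

lemma single_eq_of_degree_one {σ : Type*} {d : σ →₀ ℕ} (h : d.degree = 1) :
    ∃ j, d = Finsupp.single j 1 := by
  classical
  have hd0 : d ≠ 0 := by
    intro h0; rw [h0, map_zero] at h; omega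
  obtain ⟨j, hj⟩ := Finsupp.support_nonempty_iff.mpr hd0
  refine ⟨j, ?_⟩
  have hj1 : d j = 1 := by
    have h1 : 1 ≤ d j := Nat.one_le_iff_ne_zero.mpr (Finsupp.mem_support_iff.mp hj)
    have h2 : d j ≤ d.degree := Finsupp.le_degree j d
    omega
  ext k
  by_cases hk : k = j
  · subst hk; simp [hj1]
  · rw [Finsupp.single_apply, if_neg (Ne.symm hk)]
    by_contra hdk
    have hk' : k ∈ d.support := Finsupp.mem_support_iff.mpr hdk
    have hsub : ({j, k} : Finset σ) ⊆ d.support := by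
      intro a ha; rcases Finset.mem_insert.mp ha with h | h
      · exact h ▸ hj
      · exact (Finset.mem_singleton.mp h) ▸ hk'
    have := Finset.sum_le_sum_of_subset (f := fun i => d i) hsub
    rw [Finset.sum_pair (fun hh : j = k => hk hh.symm)] at this
    have h3 : d j + d k ≤ d.degree := by rw [Finsupp.degree_apply]; exact this
    have h4 : 1 ≤ d k := Nat.one_le_iff_ne_zero.mpr hdk
    omega

lemma degree_single_one {σ : Type*} (j : σ) : (Finsupp.single j 1 : σ →₀ ℕ).degree = 1 := by
  classical
  rw [Finsupp.degree_apply, Finsupp.support_single_ne_zero _ one_ne_zero, Finset.sum_singleton,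
    Finsupp.single_eq_same]

lemma monomial_single_eq (j : Fin n) (a : R) :
    (monomial (Finsupp.single j 1) a : MvPolynomial (Fin n) R) = C a * X j := by
  rw [X, C_mul_monomial, mul_one]

lemma homog_one_eq_sum {p : MvPolynomial (Fin n) R} (hp : p.IsHomogeneous 1) :
    p = ∑ j, C (coeff (Finsupp.single j 1) p) * X j := by
  classical
  apply MvPolynomial.ext
  intro m
  rw [coeff_sum]
  simp_rw [← monomial_single_eq, coeff_monomial]
  by_cases hm : m.degree = 1
  · obtain ⟨j0, rfl⟩ := single_eq_of_degree_one hm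
    rw [Finset.sum_eq_single j0]
    · rw [if_pos rfl]
    · intro k _ hk
      rw [if_neg]
      intro hEq
      exact hk (Finsupp.single_left_injective (one_ne_zero (α := ℕ)) hEq)
    · intro h; exact absurd (Finset.mem_univ j0) h
  · rw [hp.coeff_eq_zero hm, Finset.sum_eq_zero]
    intro k _
    rw [if_neg]
    intro hEq
    exact hm (hEq ▸ degree_single_one k)

-- ## the algebra morphism attached to a matrix

def matHom (M : Matrix (Fin n) (Fin n) R) : MvPolynomial (Fin n) R →ₐ[R] MvPolynomial (Fin n) R :=
  aeval (fun i => ∑ j, C (M i j) * X j)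

lemma matHom_X (M : Matrix (Fin n) (Fin n) R) (i : Fin n) :
    matHom M (X i) = ∑ j, C (M i j) * X j := by simp [matHom]

lemma matHom_comp (M N : Matrix (Fin n) (Fin n) R) :
    (matHom M).comp (matHom N) = matHom (N * M) := by
  apply algHom_ext
  intro i
  rw [AlgHom.comp_apply, matHom_X, matHom_X, map_sum]
  have : ∀ j : Fin n, matHom M (C (N i j) * X j) = ∑ k, C (N i j * M j k) * X k := by
    intro j
    rw [map_mul, matHom_X, show matHom M (C (N i j)) = C (N i j) from (matHom M).commutes' _,
      Finset.mul_sum]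
    exact Finset.sum_congr rfl fun k _ => by rw [← mul_assoc, ← map_mul]
  rw [Finset.sum_congr rfl fun j _ => this j, Finset.sum_comm]
  refine Finset.sum_congr rfl fun k _ => ?_
  rw [← Finset.sum_mul, ← map_sum]
  rfl

lemma matHom_one : matHom (1 : Matrix (Fin n) (Fin n) R) = AlgHom.id R _ := by
  apply algHom_ext
  intro i
  rw [matHom_X, AlgHom.id_apply]
  rw [Finset.sum_eq_single i]
  · simp
  · intro k _ hk; rw [Matrix.one_apply_ne (Ne.symm hk), map_zero, zero_mul]
  · intro h; exact absurd (Finset.mem_univ i) h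

lemma pderiv_matHom (M : Matrix (Fin n) (Fin n) R) (i j : Fin n) :
    pderiv j (matHom M (X i)) = C (M i j) := by
  rw [matHom_X, map_sum]
  rw [Finset.sum_eq_single j]
  · rw [pderiv_C_mul, pderiv_X_self, mul_one]
  · intro k _ hk
    rw [pderiv_C_mul, pderiv_X_of_ne hk, mul_zero]
  · intro h; exact absurd (Finset.mem_univ j) h

lemma jacDet_of_matHom {φ : MvPolynomial (Fin n) R ≃ₐ[R] MvPolynomial (Fin n) R}
    {M : Matrix (Fin n) (Fin n) R} (h : ∀ p, φ p = matHom M p) :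
    jacDet φ = C (M.det) := by
  have key : (Matrix.of fun i j => pderiv j (φ (X i)))
      = M.map (C : R →+* MvPolynomial (Fin n) R) := by
    refine Matrix.ext fun i j => ?_
    show pderiv j (φ (X i)) = _
    rw [h, pderiv_matHom]; rfl
  rw [jacDet, key]
  rw [← RingHom.mapMatrix_apply, ← RingHom.map_det]

lemma scaleHom_eq_matHom_diag (c : R) (i0 : Fin n) :
    scaleHom c i0 = matHom (Matrix.diagonal fun k => if k = i0 then c else 1) := by
  apply algHom_ext
  intro i
  rw [matHom_X, Finset.sum_eq_single i]
  · rw [Matrix.diagonal_apply_eq]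
    by_cases h : i = i0
    · subst h; rw [if_pos rfl, scaleHom_X_self]
    · rw [if_neg h, scaleHom_X_ne _ h, map_one, one_mul]
  · intro k _ hk
    rw [Matrix.diagonal_apply_ne _ (Ne.symm hk), map_zero, zero_mul]
  · intro h; exact absurd (Finset.mem_univ i) h

-- ## transvection automorphisms

def tAut (t : Matrix.TransvectionStruct (Fin n) R) :
    MvPolynomial (Fin n) R ≃ₐ[R] MvPolynomial (Fin n) R :=
  AlgEquiv.ofAlgHom (matHom t.toMatrix) (matHom t.inv.toMatrix)
    (by rw [matHom_comp, t.inv_mul, matHom_one])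
    (by rw [matHom_comp, t.mul_inv, matHom_one])

lemma tAut_apply (t : Matrix.TransvectionStruct (Fin n) R) (p : MvPolynomial (Fin n) R) :
    tAut t p = matHom t.toMatrix p := rfl

lemma tAut_inv_apply (t : Matrix.TransvectionStruct (Fin n) R) (p : MvPolynomial (Fin n) R) :
    (tAut t)⁻¹ p = matHom t.inv.toMatrix p := rfl

lemma matHom_transvection_X (i j : Fin n) (hij : i ≠ j) (c : R) (k : Fin n) :
    matHom (Matrix.transvection i j c) (X k : MvPolynomial (Fin n) R)
      = X k + if k = i then C c * X j else 0 := by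
  classical
  rw [matHom_X]
  have : ∀ l : Fin n, C (Matrix.transvection i j c k l) * (X l : MvPolynomial (Fin n) R)
      = C ((1 : Matrix (Fin n) (Fin n) R) k l) * X l
        + C (Matrix.single i j c k l) * X l := by
    intro l
    rw [Matrix.transvection, Matrix.add_apply, map_add, add_mul]
  rw [Finset.sum_congr rfl fun l _ => this l, Finset.sum_add_distrib]
  congr 1
  · rw [Finset.sum_eq_single k]
    · simp
    · intro l _ hl; rw [Matrix.one_apply_ne (Ne.symm hl), map_zero, zero_mul]
    · intro h; exact absurd (Finset.mem_univ k) h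
  · by_cases hk : k = i
    · subst hk
      rw [Finset.sum_eq_single j, if_pos rfl]
      · rw [Matrix.single_apply_same]
      · intro l _ hl
        rw [Matrix.single_apply_of_ne, map_zero, zero_mul]
        simp only [not_and]
        exact fun _ hh => hl hh.symm
      · intro h; exact absurd (Finset.mem_univ j) h
    · rw [if_neg hk, Finset.sum_eq_zero]
      intro l _
      rw [Matrix.single_apply_of_ne, map_zero, zero_mul]
      simp only [not_and]
      exact fun hh _ => hk hh.symm

lemma tAut_elementary (t : Matrix.TransvectionStruct (Fin n) R) : IsElementaryAut (tAut t) := by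
  obtain ⟨i, j, hij, c⟩ := t
  refine ⟨i, C c * X j, ?_, ?_, ?_⟩
  · rw [degreeOf_eq_zero_iff2]
    intro hv
    exact hij (Finset.mem_singleton.mp (vars_C_mul_X_subset c j hv))
  · rw [tAut_apply, Matrix.TransvectionStruct.toMatrix_mk, matHom_transvection_X i j hij, if_pos rfl]
  · intro k hk
    rw [tAut_apply, Matrix.TransvectionStruct.toMatrix_mk, matHom_transvection_X i j hij, if_neg hk,
      add_zero]

lemma mem_EA_of_transvections (L : List (Matrix.TransvectionStruct (Fin n) R))
    (ε : MvPolynomial (Fin n) R ≃ₐ[R] MvPolynomial (Fin n) R)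
    (h : ∀ p, ε p = matHom (L.map Matrix.TransvectionStruct.toMatrix).prod p) :
    ε ∈ EA R n := by
  induction L generalizing ε with
  | nil =>
    have : ε = 1 := by
      apply AlgEquiv.ext
      intro p
      rw [h p]
      simp only [List.map_nil, List.prod_nil, matHom_one]
      rfl
    rw [this]; exact one_mem _
  | cons t L ih =>
    have key : ∀ p, (ε * (tAut t)⁻¹) p
        = matHom (L.map Matrix.TransvectionStruct.toMatrix).prod p := by
      intro p
      show ε ((tAut t)⁻¹ p) = _
      rw [tAut_inv_apply, h]
      rw [List.map_cons, List.prod_cons]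
      rw [← AlgHom.comp_apply, matHom_comp]
      rw [show t.inv.toMatrix * (t.toMatrix * (L.map Matrix.TransvectionStruct.toMatrix).prod)
          = (L.map Matrix.TransvectionStruct.toMatrix).prod by
        rw [← mul_assoc, t.inv_mul, one_mul]]
    have h1 : ε * (tAut t)⁻¹ ∈ EA R n := ih _ key
    have h2 : tAut t ∈ EA R n := Subgroup.subset_closure (tAut_elementary t)
    have heq : ε = (ε * (tAut t)⁻¹) * tAut t := by group
    rw [heq]; exact mul_mem h1 h2

-- ## the subgroup EA ⋊ scalings

def Ggrp (R : Type*) [CommRing R] (n : ℕ) (i0 : Fin n) :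
    Subgroup (MvPolynomial (Fin n) R ≃ₐ[R] MvPolynomial (Fin n) R) where
  carrier := {φ | ∃ u : Rˣ, ∃ e ∈ EA R n, φ = e * scaleAut u i0}
  one_mem' := ⟨1, 1, one_mem _, by rw [scaleAut_one, mul_one]⟩
  mul_mem' := by
    rintro a b ⟨u, e1, he1, rfl⟩ ⟨v, e2, he2, rfl⟩
    refine ⟨u * v, e1 * (scaleAut u i0 * e2 * (scaleAut u i0)⁻¹),
      mul_mem he1 (conj_mem_EA u i0 he2), ?_⟩
    rw [scaleAut_mul]
    group
  inv_mem' := by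
    rintro a ⟨u, e, he, rfl⟩
    refine ⟨u⁻¹, scaleAut u⁻¹ i0 * e⁻¹ * (scaleAut u⁻¹ i0)⁻¹,
      conj_mem_EA u⁻¹ i0 (inv_mem he), ?_⟩
    rw [← scaleAut_inv, mul_inv_rev]
    group

lemma linear_mem_Ggrp
    (hSL : ∀ M : Matrix (Fin n) (Fin n) R, M.det = 1 →
      ∃ L : List (Matrix.TransvectionStruct (Fin n) R),
        M = (L.map Matrix.TransvectionStruct.toMatrix).prod)
    (i0 : Fin n) {ψ : MvPolynomial (Fin n) R ≃ₐ[R] MvPolynomial (Fin n) R}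
    (hψ : IsLinearAut ψ) : ψ ∈ Ggrp R n i0 := by
  classical
  set M : Matrix (Fin n) (Fin n) R :=
    Matrix.of fun i j => coeff (Finsupp.single j 1) (ψ (X i)) with hM
  have hψM : ∀ p, ψ p = matHom M p := by
    have heq : ψ.toAlgHom = matHom M := by
      apply algHom_ext
      intro i
      show ψ (X i) = _
      rw [matHom_X]
      exact homog_one_eq_sum (hψ i)
    exact fun p => DFunLike.congr_fun heq p
  have hinvcancel : ψ * ψ⁻¹ = 1 := mul_inv_cancel ψ
  have hdet1 : ψ (jacDet ψ⁻¹) * jacDet ψ = 1 := by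
    rw [← jacDet_mul, hinvcancel, jacDet_one]
  have hjψ : jacDet ψ = C M.det := jacDet_of_matHom hψM
  have hCunit : IsUnit (C M.det : MvPolynomial (Fin n) R) :=
    IsUnit.of_mul_eq_one (ψ (jacDet ψ⁻¹)) (by rw [mul_comm, ← hjψ]; exact hdet1)
  have hunit : IsUnit M.det := by
    have := hCunit.map (constantCoeff (σ := Fin n) (R := R))
    rwa [constantCoeff_C] at this
  set u : Rˣ := hunit.unit with hu
  set D : Matrix (Fin n) (Fin n) R :=
    Matrix.diagonal (fun k => if k = i0 then ((u⁻¹ : Rˣ) : R) else 1) with hD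
  have hDdet : D.det = ((u⁻¹ : Rˣ) : R) := by
    rw [hD, Matrix.det_diagonal,
      Finset.prod_ite_eq' Finset.univ i0 (fun _ => ((u⁻¹ : Rˣ) : R))]
    simp
  have hDM : (D * M).det = 1 := by
    rw [Matrix.det_mul, hDdet, show M.det = (u : R) from (hunit.unit_spec).symm]
    exact Units.inv_mul u
  obtain ⟨L, hL⟩ := hSL (D * M) hDM
  have hε : ∀ p, (ψ * (scaleAut u i0)⁻¹) p = matHom (D * M) p := by
    intro p
    show ψ ((scaleAut u i0)⁻¹ p) = _
    rw [scaleAut_inv_apply, hψM, scaleHom_eq_matHom_diag, ← AlgHom.comp_apply, matHom_comp]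
  have hεEA : ψ * (scaleAut u i0)⁻¹ ∈ EA R n :=
    mem_EA_of_transvections L _ (fun p => by rw [hε p, hL])
  exact ⟨u, ψ * (scaleAut u i0)⁻¹, hεEA, by group⟩

end TAEA

open TAEA in

theorem TA_inter_SA_eq_EA
    (R : Type*) [CommRing R] (n : ℕ)
    (hSL : ∀ M : Matrix (Fin n) (Fin n) R, M.det = 1 →
      ∃ L : List (Matrix.TransvectionStruct (Fin n) R),
        M = (L.map Matrix.TransvectionStruct.toMatrix).prod)
    (φ : MvPolynomial (Fin n) R ≃ₐ[R] MvPolynomial (Fin n) R) :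
    (φ ∈ TA R n ∧ jacDet φ = 1) ↔ φ ∈ EA R n := by
  constructor
  · rintro ⟨hTA, hjac⟩
    rcases Nat.eq_zero_or_pos n with hn | hn
    · subst hn
      have hφ1 : φ = 1 := by
        have heq : φ.toAlgHom = AlgHom.id R (MvPolynomial (Fin 0) R) :=
          algHom_ext (fun i => i.elim0)
        exact AlgEquiv.ext fun p => DFunLike.congr_fun heq p
      rw [hφ1]
      exact one_mem _
    · set i0 : Fin n := ⟨0, hn⟩
      have hTG : TA R n ≤ Ggrp R n i0 := by
        rw [TA]
        apply (Subgroup.closure_le _).mpr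
        rintro ψ (hψ | hψ)
        · exact ⟨1, ψ, Subgroup.subset_closure hψ, by rw [scaleAut_one, mul_one]⟩
        · exact linear_mem_Ggrp hSL i0 hψ
      obtain ⟨u, e, he, rfl⟩ := hTG hTA
      have hje : jacDet e = 1 := EA_le_SAgrp he
      rw [jacDet_mul, hje, mul_one, jacDet_scaleAut, aequiv_C] at hjac
      have hu1 : (u : R) = 1 := C_injective (Fin n) R (by rw [hjac, map_one])
      have : u = 1 := Units.ext hu1
      rw [this, scaleAut_one, mul_one]
      exact he
  · intro hEA
    refine ⟨Subgroup.closure_mono Set.subset_union_left hEA, EA_le_SAgrp hEA⟩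

end
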